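/- Let u, v be coprime natural numbers with 0 ≤ v < u and u ≥ 1, and let θ = 2πv/u, θ' = 2πv'/u with 0 ≤ v' < u. Suppose there exists an orientation-preserving homeomorphism η₀ : S¹ → S¹ and angles α, α' ∈ ℝ such that η₀(e^{i(α + kθ)}) = e^{i(α' + kθ')} for all k = 0, 1, …, u−1, and the points e^{i(α+kθ)}, k = 0, …, u−1, are pairwise distinct. Then v = v', hence θ = θ'. -/

import Mathlib

open Real Complex

/-- Rational-angle case of Theorem A(2): an orientation-preserving circle
homeomorphism (encoded by a continuous strictly monotone lift `η` commuting
with `x ↦ x + 2π`) carrying the orbit `e^{i(α+kθ)}` of the rotation by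
`θ = 2πv/u` to the orbit `e^{i(α'+kθ')}` of the rotation by `θ' = 2πv'/u`
forces `v = v'`, hence `θ = θ'`. -/
theorem stmt_3 (u v v' : ℕ) (hu : 1 ≤ u) (hcop : Nat.Coprime u v)
    (hv : v < u) (hv' : v' < u) (θ θ' α α' : ℝ)
    (hθ : θ = 2 * π * v / u) (hθ' : θ' = 2 * π * v' / u)
    (η : ℝ → ℝ) (hcont : Continuous η) (hmono : StrictMono η)
    (hdeck : ∀ x, η (x + 2 * π) = η x + 2 * π)
    (horb : ∀ k : ℕ, k < u → ∃ m : ℤ,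
      η (α + k * θ) = α' + k * θ' + 2 * π * m)
    (hdist : ∀ k l : ℕ, k < u → l < u → k ≠ l →
      Complex.exp (Complex.I * (α + k * θ)) ≠
        Complex.exp (Complex.I * (α + l * θ))) :
    v = v' ∧ θ = θ' := by
  have hπ : (0:ℝ) < π := Real.pi_pos
  have hu0 : (0:ℝ) < (u:ℝ) := by exact_mod_cast Nat.lt_of_lt_of_le Nat.zero_lt_one hu
  have hune : (u:ℝ) ≠ 0 := ne_of_gt hu0
  suffices hvv : v = v' by
    refine ⟨hvv, ?_⟩
    rw [hθ, hθ', hvv]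
  rcases Nat.lt_or_ge u 2 with h2 | h2
  · omega
  obtain ⟨s, -, hs⟩ := Nat.exists_mul_mod_eq_one_of_coprime hcop.symm h2
  have h0u : 0 < u := by omega
  -- iterated deck transformation
  have deck : ∀ (n : ℕ) (x : ℝ), η (x + 2*π*n) = η x + 2*π*n := by
    intro n
    induction n with
    | zero => simp
    | succ n ih =>
      intro x
      have e : x + 2*π*((n:ℝ)+1) = (x + 2*π*n) + 2*π := by ring
      push_cast
      rw [e, hdeck, ih]
      ring
  -- key: value of η at the u-th roots points
  have key : ∀ j : ℕ, j < u → ∃ N : ℤ,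
      η (α + 2*π*j/u) = α' + 2*π*N/u ∧ ∃ t : ℤ, (v:ℤ) * N = v' * j + u * t := by
    intro j hj
    set k := (j * s) % u with hk
    have hku : k < u := Nat.mod_lt _ h0u
    have hkv : k * v % u = j := by
      have h1 : k * v % u = j * (s * v) % u := by
        rw [hk, Nat.mod_mul_mod, mul_assoc]
      rw [h1, Nat.mul_mod, mul_comm s v, hs]
      simp [Nat.mod_eq_of_lt hj]
    obtain ⟨m, hm⟩ := horb k hku
    set q := k * v / u with hq
    have hnat : k * v = u * q + j := by
      rw [hq, ← hkv]
      exact (Nat.div_add_mod _ _).symm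
    have hnatR : (k:ℝ) * v = u * q + j := by exact_mod_cast congrArg (Nat.cast : ℕ → ℝ) hnat
    have hsplit : α + k * θ = (α + 2*π*j/u) + 2*π*q := by
      rw [hθ]
      have h1 : (k:ℝ) * (2*π*v/u) = 2*π*((k:ℝ)*v)/u := by ring
      rw [h1, hnatR]
      field_simp
      ring
    have hηj : η (α + 2*π*j/u) + 2*π*q = α' + k*θ' + 2*π*m := by
      rw [← deck q (α + 2*π*j/u), ← hsplit, hm]
    refine ⟨(v':ℤ) * k + u * (m - q), ?_, ?_⟩
    · rw [hθ'] at hηj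
      have h2 : η (α + 2*π*j/u) = α' + (k:ℝ)*(2*π*v'/u) + 2*π*m - 2*π*q := by linarith
      rw [h2]
      push_cast
      field_simp
      ring
    · refine ⟨(v':ℤ) * q + v * (m - q), ?_⟩
      have hZ : (k:ℤ) * v = u * q + j := by exact_mod_cast congrArg (Nat.cast : ℕ → ℤ) hnat
      push_cast
      linear_combination (v':ℤ) * hZ
  choose N hN1 hN2 using key
  set N' : ℕ → ℤ := fun j => if h : j < u then N j h else N 0 h0u + u with hN'
  have hφ : ∀ j : ℕ, j ≤ u → η (α + 2*π*j/u) = α' + 2*π*(N' j)/u := by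
    intro j hj
    rcases lt_or_eq_of_le hj with h | h
    · rw [hN']
      simp only [h, dif_pos]
      exact hN1 j h
    · rw [h]
      have e : α + 2*π*(u:ℝ)/u = α + 2*π := by field_simp
      have e0 : α + 2*π*((0:ℕ):ℝ)/u = α := by simp
      rw [e, hdeck]
      have h0 := hN1 0 h0u
      rw [e0] at h0
      rw [h0, hN']
      simp only [lt_irrefl, dif_neg, not_lt, le_refl, h0u, dif_pos]
      push_cast
      field_simp
      ring
  have hstep : ∀ j : ℕ, j < u → N' j < N' (j+1) := by
    intro j hj
    have hx : α + 2*π*(j:ℝ)/u < α + 2*π*((j+1:ℕ):ℝ)/u := by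
      have hjj : (j:ℝ) < ((j+1:ℕ):ℝ) := by push_cast; linarith
      gcongr
    have hlt := hmono hx
    rw [hφ j (le_of_lt hj), hφ (j+1) hj] at hlt
    by_contra hle
    push_neg at hle
    have hle' : ((N' (j+1)):ℝ) ≤ ((N' j):ℝ) := by exact_mod_cast hle
    have : α' + 2*π*((N' (j+1)):ℝ)/u ≤ α' + 2*π*((N' j):ℝ)/u := by
      gcongr
    linarith
  have hgap : ∀ d j : ℕ, j + d ≤ u → N' j + d ≤ N' (j + d) := by
    intro d
    induction d with
    | zero => intro j _; simp
    | succ d ih =>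
      intro j hj
      have h1 := ih j (by omega)
      have h2 := hstep (j + d) (by omega)
      have e : j + (d+1) = (j + d) + 1 := by omega
      rw [e]
      push_cast
      omega
  have htop : N' u = N' 0 + u := by
    rw [hN']
    simp [h0u]
  have hlin : ∀ j : ℕ, j ≤ u → N' j = N' 0 + j := by
    intro j hj
    have h1 := hgap j 0 (by omega)
    have h2 := hgap (u - j) j (by omega)
    rw [show j + (u - j) = u from by omega, htop] at h2
    simp only [Nat.zero_add] at h1
    omega
  obtain ⟨t0, ht0⟩ := hN2 0 h0u
  obtain ⟨tv, htv⟩ := hN2 v hv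
  have e0 : N' 0 = N 0 h0u := by rw [hN']; simp [h0u]
  have ev : N' v = N v hv := by rw [hN']; simp [hv]
  have hv0 := hlin v (le_of_lt hv)
  rw [e0, ev] at hv0
  have hdvd : (u:ℤ) ∣ (v:ℤ) * ((v:ℤ) - v') := by
    refine ⟨tv - t0, ?_⟩
    push_cast at ht0 htv
    linear_combination htv - ht0 - (v:ℤ) * hv0
  have hcop' : IsCoprime (u:ℤ) (v:ℤ) := by
    rw [Int.isCoprime_iff_gcd_eq_one, Int.gcd_natCast_natCast]
    exact hcop
  have hdvd2 : (u:ℤ) ∣ ((v:ℤ) - v') := hcop'.dvd_of_dvd_mul_left hdvd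
  have hz : (v:ℤ) - v' = 0 := by
    refine Int.eq_zero_of_abs_lt_dvd hdvd2 ?_
    rw [abs_sub_lt_iff]
    constructor <;> [skip; skip] <;> push_cast <;> omega
  omega
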